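/- Let M1 and M2 be distinct nonempty compact convex subsets of Δ_{mn} with M1^+ = M2^+ (equal sets of u_L-maximizing points). Suppose either (i) M2 \ M1 ≠ ∅, or (ii) M1^− = M2^−. Then there exists an optimizer payoff u_O : [m]×[n] → ℝ with V_L(M1, u_O) > V_L(M2, u_O); in particular, M2 does not Pareto-dominate M1. -/

import Mathlib

open Finset

noncomputable section

/-- The product CSP `x ⊗ y`. -/
def prodCSP {m n : ℕ} (x : Fin m → ℝ) (y : Fin n → ℝ) : Fin m × Fin n → ℝ :=
  fun p => x p.1 * y p.2

/-- The `j`-th vertex `e_j` of a simplex. -/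
def pureVec {k : ℕ} (j : Fin k) : Fin k → ℝ := fun j' => if j' = j then 1 else 0

/-- Linear extension of a payoff to CSPs. -/
def linCSP {m n : ℕ} (u : Fin m → Fin n → ℝ) (φ : Fin m × Fin n → ℝ) : ℝ :=
  ∑ p : Fin m × Fin n, φ p * u p.1 p.2

/-- Payoff the learner would get by always deviating to the pure action `j'`. -/
def devCSP {m n : ℕ} (u : Fin m → Fin n → ℝ) (φ : Fin m × Fin n → ℝ) (j' : Fin n) : ℝ :=
  ∑ p : Fin m × Fin n, φ p * u p.1 j'

/-- Bilinear extension of a payoff to mixed strategies. -/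
def mixPay {m n : ℕ} (u : Fin m → Fin n → ℝ) (x : Fin m → ℝ) (y : Fin n → ℝ) : ℝ :=
  ∑ i, ∑ j, x i * y j * u i j

/-- Pure best responses of the learner to the optimizer mixed strategy `x`. -/
def BRL {m n : ℕ} (u : Fin m → Fin n → ℝ) (x : Fin m → ℝ) : Set (Fin n) :=
  {j | ∀ j' : Fin n, (∑ i, x i * u i j') ≤ ∑ i, x i * u i j}

/-- A CSP is no-regret. -/
def NoRegret {m n : ℕ} (u : Fin m → Fin n → ℝ) (φ : Fin m × Fin n → ℝ) : Prop :=
  ∀ j' : Fin n, devCSP u φ j' ≤ linCSP u φ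

/-- A CSP is no-swap-regret. -/
def NoSwapRegret {m n : ℕ} (u : Fin m → Fin n → ℝ) (φ : Fin m × Fin n → ℝ) : Prop :=
  ∀ j j' : Fin n, (∑ i, φ (i, j) * u i j') ≤ ∑ i, φ (i, j) * u i j

/-- The no-regret menu: all no-regret CSPs. -/
def MNR {m n : ℕ} (u : Fin m → Fin n → ℝ) : Set (Fin m × Fin n → ℝ) :=
  {φ | φ ∈ stdSimplex ℝ (Fin m × Fin n) ∧ NoRegret u φ}

/-- The no-swap-regret menu: all no-swap-regret CSPs. -/
def MNSR {m n : ℕ} (u : Fin m → Fin n → ℝ) : Set (Fin m × Fin n → ℝ) :=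
  {φ | φ ∈ stdSimplex ℝ (Fin m × Fin n) ∧ NoSwapRegret u φ}

/-- A menu: a closed convex subset of the simplex of CSPs such that every optimizer
mixed strategy has some product response inside the set. -/
def IsMenu {m n : ℕ} (M : Set (Fin m × Fin n → ℝ)) : Prop :=
  IsClosed M ∧ Convex ℝ M ∧ M ⊆ stdSimplex ℝ (Fin m × Fin n) ∧
    ∀ x ∈ stdSimplex ℝ (Fin m), ∃ y ∈ stdSimplex ℝ (Fin n), prodCSP x y ∈ M

/-- The learner's value when the optimizer with payoff `uO` picks their favorite point
of the menu `M`, breaking ties in the learner's favor. -/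
def VL {m n : ℕ} (uL uO : Fin m → Fin n → ℝ) (M : Set (Fin m × Fin n → ℝ)) : ℝ :=
  sSup (linCSP uL '' {φ ∈ M | ∀ ψ ∈ M, linCSP uO ψ ≤ linCSP uO φ})

/-- `M'` Pareto-dominates `M` (for the learner payoff `uL`). -/
def ParetoDominates {m n : ℕ} (uL : Fin m → Fin n → ℝ)
    (M' M : Set (Fin m × Fin n → ℝ)) : Prop :=
  (∀ uO : Fin m → Fin n → ℝ, VL uL uO M ≤ VL uL uO M') ∧
    ∃ uO : Fin m → Fin n → ℝ, VL uL uO M < VL uL uO M'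

/-- A menu is Pareto-optimal if it is a menu and no menu Pareto-dominates it. -/
def ParetoOptimal {m n : ℕ} (uL : Fin m → Fin n → ℝ) (M : Set (Fin m × Fin n → ℝ)) : Prop :=
  IsMenu M ∧ ∀ M' : Set (Fin m × Fin n → ℝ), IsMenu M' → ¬ ParetoDominates uL M' M

/-- (A2): no weakly dominated learner actions. -/
def A2cond {m n : ℕ} (u : Fin m → Fin n → ℝ) : Prop :=
  ∀ j : Fin n, (∃ x ∈ stdSimplex ℝ (Fin m), j ∈ BRL u x) →
    ∃ x' ∈ stdSimplex ℝ (Fin m), BRL u x' = {j}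

/-- `U^-(M)`: the minimal learner utility over `M`. -/
def UminusVal {m n : ℕ} (u : Fin m → Fin n → ℝ) (M : Set (Fin m × Fin n → ℝ)) : ℝ :=
  sInf (linCSP u '' M)

/-- `U^+(M)`: the maximal learner utility over `M`. -/
def UplusVal {m n : ℕ} (u : Fin m → Fin n → ℝ) (M : Set (Fin m × Fin n → ℝ)) : ℝ :=
  sSup (linCSP u '' M)

/-- `M^-`: the set of learner-utility-minimizing points of `M`. -/
def MminusSet {m n : ℕ} (u : Fin m → Fin n → ℝ) (M : Set (Fin m × Fin n → ℝ)) :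
    Set (Fin m × Fin n → ℝ) :=
  {φ ∈ M | linCSP u φ = UminusVal u M}

/-- `M^+`: the set of learner-utility-maximizing points of `M`. -/
def MplusSet {m n : ℕ} (u : Fin m → Fin n → ℝ) (M : Set (Fin m × Fin n → ℝ)) :
    Set (Fin m × Fin n → ℝ) :=
  {φ ∈ M | linCSP u φ = UplusVal u M}

/-- The zero-sum value `U_ZS = min_x max_y u_L(x,y)`. -/
def UZSval {m n : ℕ} (u : Fin m → Fin n → ℝ) : ℝ :=
  sInf ((fun x => sSup ((fun y => mixPay u x y) '' stdSimplex ℝ (Fin n))) ''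
    stdSimplex ℝ (Fin m))

section NonDominanceAux
variable {m n : ℕ}

lemma linCSP_cont (u : Fin m → Fin n → ℝ) : Continuous (linCSP u) := by
  unfold linCSP
  exact continuous_finset_sum _ fun p _ => (continuous_apply p).mul continuous_const

lemma linCSP_line (u v : Fin m → Fin n → ℝ) (t : ℝ) (φ : Fin m × Fin n → ℝ) :
    linCSP (fun i j => u i j + t * v i j) φ = linCSP u φ + t * linCSP v φ := by
  unfold linCSP
  rw [Finset.mul_sum, ← Finset.sum_add_distrib]
  congr 1; ext p; ring

lemma abs_linCSP_le {u : Fin m → Fin n → ℝ} {c : ℝ} (hc : ∀ i j, |u i j| ≤ c)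
    {φ : Fin m × Fin n → ℝ} (hφ : φ ∈ stdSimplex ℝ (Fin m × Fin n)) :
    |linCSP u φ| ≤ c := by
  calc |linCSP u φ| ≤ ∑ p : Fin m × Fin n, |φ p * u p.1 p.2| :=
        Finset.abs_sum_le_sum_abs _ _
    _ ≤ ∑ p : Fin m × Fin n, φ p * c := by
        refine Finset.sum_le_sum fun p _ => ?_
        rw [abs_mul, abs_of_nonneg (hφ.1 p)]
        exact mul_le_mul_of_nonneg_left (hc p.1 p.2) (hφ.1 p)
    _ = c := by rw [← Finset.sum_mul, hφ.2, one_mul]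

lemma abs_linCSP_le_sum (u : Fin m → Fin n → ℝ) {φ : Fin m × Fin n → ℝ}
    (hφ : φ ∈ stdSimplex ℝ (Fin m × Fin n)) :
    |linCSP u φ| ≤ ∑ p : Fin m × Fin n, |u p.1 p.2| := by
  refine abs_linCSP_le (fun i j => ?_) hφ
  exact Finset.single_le_sum (f := fun p : Fin m × Fin n => |u p.1 p.2|)
    (fun p _ => abs_nonneg _) (Finset.mem_univ (i, j))

/-- attainment of the sup of a linear functional on a compact nonempty set -/
lemma exists_isGreatest (u : Fin m → Fin n → ℝ) {M : Set (Fin m × Fin n → ℝ)}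
    (hc : IsCompact M) (hne : M.Nonempty) :
    ∃ φ ∈ M, IsGreatest (linCSP u '' M) (linCSP u φ) ∧
      sSup (linCSP u '' M) = linCSP u φ := by
  obtain ⟨φ, hφM, hmax⟩ := hc.exists_isMaxOn hne (linCSP_cont u).continuousOn
  have hg : IsGreatest (linCSP u '' M) (linCSP u φ) :=
    ⟨Set.mem_image_of_mem _ hφM, by rintro y ⟨ψ, hψ, rfl⟩; exact hmax hψ⟩
  exact ⟨φ, hφM, hg, hg.csSup_eq⟩

lemma exists_isLeast (u : Fin m → Fin n → ℝ) {M : Set (Fin m × Fin n → ℝ)}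
    (hc : IsCompact M) (hne : M.Nonempty) :
    ∃ φ ∈ M, IsLeast (linCSP u '' M) (linCSP u φ) ∧
      sInf (linCSP u '' M) = linCSP u φ := by
  obtain ⟨φ, hφM, hmin⟩ := hc.exists_isMinOn hne (linCSP_cont u).continuousOn
  have hg : IsLeast (linCSP u '' M) (linCSP u φ) :=
    ⟨Set.mem_image_of_mem _ hφM, by rintro y ⟨ψ, hψ, rfl⟩; exact hmin hψ⟩
  exact ⟨φ, hφM, hg, hg.csInf_eq⟩

/-- characterization of VL on a compact nonempty set -/
lemma VL_spec (uL uO : Fin m → Fin n → ℝ) {M : Set (Fin m × Fin n → ℝ)}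
    (hc : IsCompact M) (hne : M.Nonempty) :
    ∃ φ, φ ∈ M ∧ (∀ ψ ∈ M, linCSP uO ψ ≤ linCSP uO φ) ∧
      linCSP uL φ = VL uL uO M ∧
      (∀ ψ, ψ ∈ M → (∀ χ ∈ M, linCSP uO χ ≤ linCSP uO ψ) → linCSP uL ψ ≤ VL uL uO M) := by
  set S : Set (Fin m × Fin n → ℝ) := {φ ∈ M | ∀ ψ ∈ M, linCSP uO ψ ≤ linCSP uO φ} with hS
  have hSsub : S ⊆ M := fun φ hφ => hφ.1
  have hSclosed : IsClosed S := by
    have : S = M ∩ ⋂ ψ ∈ M, {φ | linCSP uO ψ ≤ linCSP uO φ} := by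
      ext φ; simp [hS, Set.mem_iInter]
    rw [this]
    exact hc.isClosed.inter (isClosed_biInter fun ψ _ =>
      isClosed_le continuous_const (linCSP_cont uO))
  have hScomp : IsCompact S := hc.of_isClosed_subset hSclosed hSsub
  have hSne : S.Nonempty := by
    obtain ⟨φ, hφM, hg, _⟩ := exists_isGreatest uO hc hne
    exact ⟨φ, hφM, fun ψ hψ => hg.2 (Set.mem_image_of_mem _ hψ)⟩
  obtain ⟨φ, hφS, hg, hsup⟩ := exists_isGreatest uL hScomp hSne
  refine ⟨φ, hφS.1, hφS.2, ?_, ?_⟩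
  · rw [VL, hsup]
  · intro ψ hψM hψmax
    have : linCSP uL ψ ∈ linCSP uL '' S := Set.mem_image_of_mem _ ⟨hψM, hψmax⟩
    rw [VL, hsup]
    exact hg.2 this

lemma VL_bounds (uL uO : Fin m → Fin n → ℝ) (hbound : ∀ i j, uL i j ∈ Set.Icc (-1 : ℝ) 1)
    {M : Set (Fin m × Fin n → ℝ)} (hc : IsCompact M) (hne : M.Nonempty)
    (hsub : M ⊆ stdSimplex ℝ (Fin m × Fin n)) :
    VL uL uO M ∈ Set.Icc (-1 : ℝ) 1 := by
  obtain ⟨φ, hφM, _, hVL, _⟩ := VL_spec uL uO hc hne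
  have := abs_linCSP_le (u := uL) (c := 1)
    (fun i j => abs_le.2 ⟨(hbound i j).1, (hbound i j).2⟩) (hsub hφM)
  rw [← hVL]
  exact ⟨neg_le_of_abs_le this, le_of_abs_le this⟩

lemma approach {E : Type*} [TopologicalSpace E] [T2Space E] {M : Set E}
    (hc : IsCompact M) {g v : E → ℝ} (hgc : Continuous g) (hvc : Continuous v)
    {b ε : ℝ} (hε : 0 < ε) (hg0 : ∀ φ ∈ M, g φ ≤ 0) (hb : ∀ φ ∈ M, g φ = 0 → v φ ≤ b) :
    ∃ δ > 0, ∀ φ ∈ M, -δ ≤ g φ → v φ ≤ b + ε := by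
  by_contra h
  push_neg at h
  set K : ℕ → Set E := fun k => {φ ∈ M | -(1 / (k + 1)) ≤ g φ ∧ b + ε ≤ v φ} with hK
  have hKcl : ∀ k, IsClosed (K k) := fun k => by
    have : K k = M ∩ ({φ | -(1 / (k + 1 : ℝ)) ≤ g φ} ∩ {φ | b + ε ≤ v φ}) := by
      rfl
    rw [this]
    exact hc.isClosed.inter ((isClosed_le continuous_const hgc).inter
      (isClosed_le continuous_const hvc))
  have hKsub : ∀ k, K k ⊆ M := fun k φ hφ => hφ.1
  have hKne : ∀ k, (K k).Nonempty := by
    intro k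
    obtain ⟨φ, hφM, hgφ, hvφ⟩ := h (1 / (k + 1 : ℝ)) (by positivity)
    exact ⟨φ, hφM, hgφ, hvφ.le⟩
  have hKmono : ∀ k, K (k + 1) ⊆ K k := by
    intro k φ hφ
    refine ⟨hφ.1, le_trans ?_ hφ.2.1, hφ.2.2⟩
    rw [neg_le_neg_iff]
    apply one_div_le_one_div_of_le (by positivity)
    push_cast; linarith
  obtain ⟨φ, hφ⟩ := IsCompact.nonempty_iInter_of_sequence_nonempty_isCompact_isClosed
    K hKmono hKne (hc.of_isClosed_subset (hKcl 0) (hKsub 0)) hKcl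
  simp only [Set.mem_iInter] at hφ
  have hφM : φ ∈ M := (hφ 0).1
  have hg : g φ = 0 := by
    refine le_antisymm (hg0 φ hφM) ?_
    by_contra hlt
    push_neg at hlt
    obtain ⟨k, hk⟩ := exists_nat_one_div_lt (neg_pos.2 hlt)
    have := (hφ k).2.1
    push_cast at this hk
    linarith
  have := hb φ hφM hg
  have := (hφ 0).2.2
  linarith

lemma subset_of_sSup_le {M1 M2 : Set (Fin m × Fin n → ℝ)}
    (h1cl : IsClosed M1) (h1conv : Convex ℝ M1) (h1ne : M1.Nonempty)
    (h2c : IsCompact M2)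
    (hle : ∀ u : Fin m → Fin n → ℝ, sSup (linCSP u '' M2) ≤ sSup (linCSP u '' M1)) :
    M2 ⊆ M1 := by
  intro ψ hψ
  by_contra hnot
  obtain ⟨f, s, hfs, hsψ⟩ := geometric_hahn_banach_closed_point h1conv h1cl hnot
  set u : Fin m → Fin n → ℝ := fun i j => f (fun q => if (i, j) = q then 1 else 0) with hu
  have hrep : ∀ φ : Fin m × Fin n → ℝ, linCSP u φ = f φ := by
    intro φ
    conv_rhs => rw [pi_eq_sum_univ φ]
    rw [map_sum]
    refine Finset.sum_congr rfl fun p _ => ?_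
    rw [map_smul, smul_eq_mul]
  have h1 : sSup (linCSP u '' M1) ≤ s :=
    csSup_le (h1ne.image _) (by rintro y ⟨a, ha, rfl⟩; rw [hrep]; exact (hfs a ha).le)
  have h2 : f ψ ≤ sSup (linCSP u '' M2) := by
    rw [← hrep]
    exact le_csSup (h2c.image (linCSP_cont u)).bddAbove (Set.mem_image_of_mem _ hψ)
  linarith [hle u]

section mono
variable (uL uO : Fin m → Fin n → ℝ) {M1 M2 : Set (Fin m × Fin n → ℝ)}

/-- one-step inequality -/
lemma Gstep (h1c : IsCompact M1) (h1ne : M1.Nonempty) (h2c : IsCompact M2)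
    (h2ne : M2.Nonempty)
    (Hmono : ∀ u, VL uL u M1 ≤ VL uL u M2) {s t : ℝ} (hst : s ≤ t) :
    (t - s) * (VL uL (fun i j => uO i j + s * uL i j) M1
        - VL uL (fun i j => uO i j + t * uL i j) M1) ≤
      (sSup (linCSP (fun i j => uO i j + t * uL i j) '' M2)
          - sSup (linCSP (fun i j => uO i j + t * uL i j) '' M1))
        - (sSup (linCSP (fun i j => uO i j + s * uL i j) '' M2)
          - sSup (linCSP (fun i j => uO i j + s * uL i j) '' M1)) := by
  set As : Fin m → Fin n → ℝ := fun i j => uO i j + s * uL i j with hAs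
  set At : Fin m → Fin n → ℝ := fun i j => uO i j + t * uL i j with hAt
  obtain ⟨φ2, hφ2M, hφ2max, hφ2VL, -⟩ := VL_spec uL As h2c h2ne
  obtain ⟨φ1, hφ1M, hφ1max, hφ1VL, -⟩ := VL_spec uL At h1c h1ne
  have key : ∀ (u : Fin m → Fin n → ℝ) (r : ℝ) (φ : Fin m × Fin n → ℝ),
      linCSP (fun i j => uO i j + r * uL i j) φ = linCSP uO φ + r * linCSP uL φ :=
    fun u r φ => linCSP_line uO uL r φ
  -- exact values of the two sups
  have h2s : sSup (linCSP As '' M2) = linCSP As φ2 :=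
    IsGreatest.csSup_eq ⟨Set.mem_image_of_mem _ hφ2M,
      by rintro y ⟨ψ, hψ, rfl⟩; exact hφ2max ψ hψ⟩
  have h1t : sSup (linCSP At '' M1) = linCSP At φ1 :=
    IsGreatest.csSup_eq ⟨Set.mem_image_of_mem _ hφ1M,
      by rintro y ⟨ψ, hψ, rfl⟩; exact hφ1max ψ hψ⟩
  have h2t : linCSP At φ2 ≤ sSup (linCSP At '' M2) :=
    le_csSup ((h2c.image (linCSP_cont At)).bddAbove) (Set.mem_image_of_mem _ hφ2M)
  have h1s : linCSP As φ1 ≤ sSup (linCSP As '' M1) :=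
    le_csSup ((h1c.image (linCSP_cont As)).bddAbove) (Set.mem_image_of_mem _ hφ1M)
  have e2t : linCSP At φ2 = linCSP uO φ2 + t * linCSP uL φ2 := key uO t φ2
  have e2s : linCSP As φ2 = linCSP uO φ2 + s * linCSP uL φ2 := key uO s φ2
  have e1t : linCSP At φ1 = linCSP uO φ1 + t * linCSP uL φ1 := key uO t φ1
  have e1s : linCSP As φ1 = linCSP uO φ1 + s * linCSP uL φ1 := key uO s φ1
  have hmono := Hmono As
  rw [← hφ2VL] at hmono
  have hts : (0:ℝ) ≤ t - s := sub_nonneg.2 hst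
  have hprod : (t - s) * (VL uL As M1) ≤ (t - s) * linCSP uL φ2 :=
    mul_le_mul_of_nonneg_left hmono hts
  rw [← hφ1VL, h2s, h1t]
  nlinarith [h2t, h1s, e2t, e2s, e1t, e1s]
end mono

section mono2
variable (uL uO : Fin m → Fin n → ℝ) {M1 M2 : Set (Fin m × Fin n → ℝ)}

lemma Gmono (hbound : ∀ i j, uL i j ∈ Set.Icc (-1 : ℝ) 1)
    (h1c : IsCompact M1) (h1ne : M1.Nonempty) (h1sub : M1 ⊆ stdSimplex ℝ (Fin m × Fin n))
    (h2c : IsCompact M2) (h2ne : M2.Nonempty)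
    (Hmono : ∀ u, VL uL u M1 ≤ VL uL u M2) {s t : ℝ} (hst : s ≤ t) :
    sSup (linCSP (fun i j => uO i j + s * uL i j) '' M2)
        - sSup (linCSP (fun i j => uO i j + s * uL i j) '' M1)
      ≤ sSup (linCSP (fun i j => uO i j + t * uL i j) '' M2)
        - sSup (linCSP (fun i j => uO i j + t * uL i j) '' M1) := by
  set G : ℝ → ℝ := fun r => sSup (linCSP (fun i j => uO i j + r * uL i j) '' M2)
    - sSup (linCSP (fun i j => uO i j + r * uL i j) '' M1) with hGdef
  set v : ℝ → ℝ := fun r => VL uL (fun i j => uO i j + r * uL i j) M1 with hvdef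
  show G s ≤ G t
  have hG : ∀ a b : ℝ, a ≤ b → (b - a) * (v a - v b) ≤ G b - G a := fun a b hab =>
    Gstep uL uO h1c h1ne h2c h2ne Hmono hab
  have hv : ∀ r : ℝ, v r ∈ Set.Icc (-1 : ℝ) 1 := fun r =>
    VL_bounds uL _ hbound h1c h1ne h1sub
  rcases eq_or_lt_of_le hst with rfl | hlt
  · exact le_refl _
  have hts : (0:ℝ) < t - s := sub_pos.2 hlt
  have hN : ∀ N : ℕ, 0 < N → G s - G t ≤ 2 * (t - s) / N := by
    intro N hNpos
    have hN0 : (N : ℝ) ≠ 0 := Nat.cast_ne_zero.2 hNpos.ne'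
    have hNpos' : (0:ℝ) < N := Nat.cast_pos.2 hNpos
    set Δ : ℝ := (t - s) / N with hΔdef
    have hΔpos : 0 < Δ := div_pos hts hNpos'
    set r : ℕ → ℝ := fun k => s + k * Δ with hrdef
    have hr0 : r 0 = s := by simp [hrdef]
    have hrN : r N = t := by
      simp only [hrdef, hΔdef]
      field_simp
      ring
    have hrstep : ∀ k : ℕ, r (k + 1) = r k + Δ := by
      intro k; simp only [hrdef]; push_cast; ring
    have tele1 : ∑ k ∈ Finset.range N, (G (r (k+1)) - G (r k)) = G (r N) - G (r 0) :=
      Finset.sum_range_sub (fun k => G (r k)) N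
    have tele2 : ∑ k ∈ Finset.range N, (v (r k) - v (r (k+1))) = v (r 0) - v (r N) :=
      Finset.sum_range_sub' (fun k => v (r k)) N
    have hterm : ∀ k ∈ Finset.range N, Δ * (v (r k) - v (r (k+1)))
        ≤ G (r (k+1)) - G (r k) := by
      intro k _
      have hab : r k ≤ r (k + 1) := by rw [hrstep]; linarith
      have h := hG (r k) (r (k+1)) hab
      have hd : r (k+1) - r k = Δ := by rw [hrstep]; ring
      rwa [hd] at h
    have sumle := Finset.sum_le_sum hterm
    rw [tele1, ← Finset.mul_sum, tele2, hr0, hrN] at sumle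
    have hvs := hv s; have hvt := hv t
    have h2 : Δ * (-2 : ℝ) ≤ Δ * (v s - v t) := by
      apply mul_le_mul_of_nonneg_left _ hΔpos.le
      have := hvs.1; have := hvt.2; simp only [Set.mem_Icc] at hvs hvt; linarith
    have : 2 * (t - s) / N = 2 * Δ := by rw [hΔdef]; ring
    rw [this]
    linarith
  by_contra hcon
  push_neg at hcon
  set ε := G s - G t with hεdef
  have hε : 0 < ε := sub_pos.2 hcon
  obtain ⟨N, hN2⟩ := exists_nat_gt (2 * (t - s) / ε)
  have hq : 0 < 2 * (t - s) / ε := by positivity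
  have hNpos : 0 < N := by
    by_contra h0
    push_neg at h0
    interval_cases N
    · simp at hN2; linarith
  have hle := hN N hNpos
  have hNpos' : (0:ℝ) < N := Nat.cast_pos.2 hNpos
  have : 2 * (t - s) / (N:ℝ) < ε := by
    rw [div_lt_iff₀ hNpos']
    rw [div_lt_iff₀ hε] at hN2
    linarith
  linarith
end mono2

lemma stepA (uL : Fin m → Fin n → ℝ) (hbound : ∀ i j, uL i j ∈ Set.Icc (-1 : ℝ) 1)
    {M1 M2 : Set (Fin m × Fin n → ℝ)}
    (h1c : IsCompact M1) (h1ne : M1.Nonempty) (h1sub : M1 ⊆ stdSimplex ℝ (Fin m × Fin n))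
    (h2c : IsCompact M2) (h2ne : M2.Nonempty) (h2sub : M2 ⊆ stdSimplex ℝ (Fin m × Fin n))
    (hplus : MplusSet uL M1 = MplusSet uL M2)
    (hno : ∀ u, VL uL u M1 ≤ VL uL u M2) :
    ∀ uO : Fin m → Fin n → ℝ, sSup (linCSP uO '' M2) ≤ sSup (linCSP uO '' M1) := by
  intro uO
  refine le_of_forall_pos_le_add ?_
  intro ε hε
  obtain ⟨φa, hφaM, hφag, hφasup⟩ := exists_isGreatest uL h1c h1ne
  set U := linCSP uL φa with hUdef
  have hφaP1 : φa ∈ MplusSet uL M1 := ⟨hφaM, by rw [UplusVal, hφasup]⟩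
  have hφaP2 : φa ∈ MplusSet uL M2 := hplus ▸ hφaP1
  have hU2 : sSup (linCSP uL '' M2) = U := by
    have := hφaP2.2
    rw [UplusVal] at this
    exact this.symm
  have huLle2 : ∀ φ ∈ M2, linCSP uL φ ≤ U := by
    intro φ hφ
    rw [← hU2]
    exact le_csSup (h2c.image (linCSP_cont uL)).bddAbove (Set.mem_image_of_mem _ hφ)
  -- the common plus set and its uO-maximizer
  have hPsub1 : MplusSet uL M1 ⊆ M1 := fun φ hφ => hφ.1
  have hPclosed : IsClosed (MplusSet uL M1) := by
    have hPeq : MplusSet uL M1 = M1 ∩ linCSP uL ⁻¹' {UplusVal uL M1} := rfl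
    rw [hPeq]
    exact h1c.isClosed.inter (IsClosed.preimage (linCSP_cont uL) isClosed_singleton)
  have hPc : IsCompact (MplusSet uL M1) := h1c.of_isClosed_subset hPclosed hPsub1
  have hPne : (MplusSet uL M1).Nonempty := ⟨φa, hφaP1⟩
  obtain ⟨φp, hφpP, hφpmax⟩ := hPc.exists_isMaxOn hPne (linCSP_cont uO).continuousOn
  set F := linCSP uO φp with hFdef
  -- approach lemma on M2
  obtain ⟨δ, hδpos, hδ⟩ := approach (g := fun φ => linCSP uL φ - U) (v := linCSP uO) h2c
    ((linCSP_cont uL).sub continuous_const) (linCSP_cont uO) hε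
    (fun φ hφ => sub_nonpos.2 (huLle2 φ hφ))
    (by
      intro φ hφ hφ0
      have hφU : linCSP uL φ = U := by linarith [sub_eq_zero.1 hφ0]
      have hφP2 : φ ∈ MplusSet uL M2 := ⟨hφ, by rw [UplusVal, hU2, hφU]⟩
      have hφP : φ ∈ MplusSet uL M1 := by rw [hplus]; exact hφP2
      exact hφpmax hφP)
  set C := ∑ p : Fin m × Fin n, |uO p.1 p.2| with hCdef
  have hC0 : 0 ≤ C := Finset.sum_nonneg fun p _ => abs_nonneg _
  set t := (2 * C + 1) / δ with htdef
  have htpos : 0 < t := by positivity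
  set At : Fin m → Fin n → ℝ := fun i j => uO i j + t * uL i j with hAt
  obtain ⟨φt, hφtM, hφtg, hφtsup⟩ := exists_isGreatest At h2c h2ne
  have hφpM2 : φp ∈ M2 := (show φp ∈ MplusSet uL M2 from hplus ▸ hφpP).1
  have hφpM1 : φp ∈ M1 := hPsub1 hφpP
  have hφpU : linCSP uL φp = U := by
    have := hφpP.2
    rw [UplusVal, hφasup] at this
    exact this
  have est : linCSP At φp ≤ linCSP At φt := hφtg.2 (Set.mem_image_of_mem _ hφpM2)
  have eAt : ∀ φ, linCSP At φ = linCSP uO φ + t * linCSP uL φ := fun φ => linCSP_line uO uL t φ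
  rw [eAt, eAt, hφpU] at est
  have hbd1 : |linCSP uO φt| ≤ C := abs_linCSP_le_sum uO (h2sub hφtM)
  have hbd2 : |linCSP uO φp| ≤ C := abs_linCSP_le_sum uO (h2sub hφpM2)
  rw [abs_le] at hbd1 hbd2
  have htd : t * δ = 2 * C + 1 := by
    rw [htdef]; field_simp
  have hkey : t * (U - linCSP uL φt) ≤ t * δ := by nlinarith
  have hkey2 : U - linCSP uL φt ≤ δ := le_of_mul_le_mul_left hkey htpos
  have hφtle : linCSP uO φt ≤ F + ε := hδ φt hφtM (by linarith)
  have huLφt : linCSP uL φt ≤ U := huLle2 φt hφtM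
  -- G t ≤ ε
  have hlower : linCSP At φp ≤ sSup (linCSP At '' M1) :=
    le_csSup (h1c.image (linCSP_cont At)).bddAbove (Set.mem_image_of_mem _ hφpM1)
  have hGt : sSup (linCSP At '' M2) - sSup (linCSP At '' M1) ≤ ε := by
    rw [hφtsup, eAt]
    rw [eAt, hφpU] at hlower
    have hmul : t * linCSP uL φt ≤ t * U := mul_le_mul_of_nonneg_left huLφt htpos.le
    linarith
  have hmon := Gmono uL uO hbound h1c h1ne h1sub h2c h2ne hno (le_of_lt htpos) (s := 0)
  have hA0 : (fun i j => uO i j + (0:ℝ) * uL i j) = uO := by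
    funext i j; ring
  rw [hA0] at hmon
  linarith

lemma stepB (uL : Fin m → Fin n → ℝ) (hbound : ∀ i j, uL i j ∈ Set.Icc (-1 : ℝ) 1)
    {M1 M2 : Set (Fin m × Fin n → ℝ)}
    (h1c : IsCompact M1) (h1ne : M1.Nonempty) (h1sub : M1 ⊆ stdSimplex ℝ (Fin m × Fin n))
    (h2c : IsCompact M2) (h2ne : M2.Nonempty) (h2sub : M2 ⊆ stdSimplex ℝ (Fin m × Fin n))
    (hminus : MminusSet uL M1 = MminusSet uL M2)
    (hno : ∀ u, VL uL u M1 ≤ VL uL u M2) :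
    ∀ uO : Fin m → Fin n → ℝ, sSup (linCSP uO '' M1) ≤ sSup (linCSP uO '' M2) := by
  intro uO
  refine le_of_forall_pos_le_add ?_
  intro ε hε
  obtain ⟨φb, hφbM, hφbl, hφbinf⟩ := exists_isLeast uL h1c h1ne
  set L := linCSP uL φb with hLdef
  have hφbP1 : φb ∈ MminusSet uL M1 := ⟨hφbM, by rw [UminusVal, hφbinf]⟩
  have huLge1 : ∀ φ ∈ M1, L ≤ linCSP uL φ := by
    intro φ hφ
    exact hφbl.2 (Set.mem_image_of_mem _ hφ)
  -- the common minus set and its uO-maximizer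
  have hPsub1 : MminusSet uL M1 ⊆ M1 := fun φ hφ => hφ.1
  have hPclosed : IsClosed (MminusSet uL M1) := by
    have hPeq : MminusSet uL M1 = M1 ∩ linCSP uL ⁻¹' {UminusVal uL M1} := rfl
    rw [hPeq]
    exact h1c.isClosed.inter (IsClosed.preimage (linCSP_cont uL) isClosed_singleton)
  have hPc : IsCompact (MminusSet uL M1) := h1c.of_isClosed_subset hPclosed hPsub1
  have hPne : (MminusSet uL M1).Nonempty := ⟨φb, hφbP1⟩
  obtain ⟨φp, hφpP, hφpmax⟩ := hPc.exists_isMaxOn hPne (linCSP_cont uO).continuousOn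
  set F := linCSP uO φp with hFdef
  -- approach lemma on M1
  obtain ⟨δ, hδpos, hδ⟩ := approach (g := fun φ => L - linCSP uL φ) (v := linCSP uO) h1c
    (continuous_const.sub (linCSP_cont uL)) (linCSP_cont uO) hε
    (fun φ hφ => sub_nonpos.2 (huLge1 φ hφ))
    (by
      intro φ hφ hφ0
      have hφL : linCSP uL φ = L := by linarith [sub_eq_zero.1 hφ0]
      have hφP : φ ∈ MminusSet uL M1 := ⟨hφ, by rw [UminusVal, hφbinf]; exact hφL⟩
      exact hφpmax hφP)
  set C := ∑ p : Fin m × Fin n, |uO p.1 p.2| with hCdef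
  have hC0 : 0 ≤ C := Finset.sum_nonneg fun p _ => abs_nonneg _
  set t := (2 * C + 1) / δ with htdef
  have htpos : 0 < t := by positivity
  set At : Fin m → Fin n → ℝ := fun i j => uO i j + (-t) * uL i j with hAt
  obtain ⟨φt, hφtM, hφtg, hφtsup⟩ := exists_isGreatest At h1c h1ne
  have hφpM1 : φp ∈ M1 := hPsub1 hφpP
  have hφpM2 : φp ∈ M2 := (show φp ∈ MminusSet uL M2 from hminus ▸ hφpP).1
  have hφpL : linCSP uL φp = L := by
    have := hφpP.2
    rw [UminusVal, hφbinf] at this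
    exact this
  have eAt : ∀ φ, linCSP At φ = linCSP uO φ + (-t) * linCSP uL φ :=
    fun φ => linCSP_line uO uL (-t) φ
  have est : linCSP At φp ≤ linCSP At φt := hφtg.2 (Set.mem_image_of_mem _ hφpM1)
  rw [eAt, eAt, hφpL] at est
  have hbd1 : |linCSP uO φt| ≤ C := abs_linCSP_le_sum uO (h1sub hφtM)
  have hbd2 : |linCSP uO φp| ≤ C := abs_linCSP_le_sum uO (h1sub hφpM1)
  rw [abs_le] at hbd1 hbd2
  have htd : t * δ = 2 * C + 1 := by
    rw [htdef]; field_simp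
  have hkey : t * (linCSP uL φt - L) ≤ t * δ := by nlinarith
  have hkey2 : linCSP uL φt - L ≤ δ := le_of_mul_le_mul_left hkey htpos
  have hφtle : linCSP uO φt ≤ F + ε := hδ φt hφtM (by show -δ ≤ L - linCSP uL φt; linarith)
  have huLφt : L ≤ linCSP uL φt := huLge1 φt hφtM
  -- G (-t) ≥ -ε
  have hlower : linCSP At φp ≤ sSup (linCSP At '' M2) :=
    le_csSup (h2c.image (linCSP_cont At)).bddAbove (Set.mem_image_of_mem _ hφpM2)
  have hGt : -ε ≤ sSup (linCSP At '' M2) - sSup (linCSP At '' M1) := by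
    rw [hφtsup, eAt]
    rw [eAt, hφpL] at hlower
    have hmul : (-t) * linCSP uL φt ≤ (-t) * L := by nlinarith
    linarith
  have hmon := Gmono uL uO hbound h1c h1ne h1sub h2c h2ne hno
    (show -t ≤ (0:ℝ) by linarith) (s := -t) (t := 0)
  have hA0 : (fun i j => uO i j + (0:ℝ) * uL i j) = uO := by
    funext i j; ring
  rw [hA0] at hmon
  linarith

end NonDominanceAux

/-- non-dominance lemma. If `M1` and `M2` are distinct nonempty compact convex
subsets of the CSP simplex with the same maximum-value set, and either `M2 \ M1 ≠ ∅` or the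
minimum-value sets coincide, then some optimizer payoff gives the learner strictly more in
`M1` than in `M2`; in particular `M2` does not Pareto-dominate `M1`. -/
theorem non_dominance_of_distinct_menus
    (m n : ℕ) (hm : 0 < m) (hn : 0 < n)
    (uL : Fin m → Fin n → ℝ) (hbound : ∀ i j, uL i j ∈ Set.Icc (-1 : ℝ) 1)
    (M1 M2 : Set (Fin m × Fin n → ℝ))
    (h1sub : M1 ⊆ stdSimplex ℝ (Fin m × Fin n)) (h1c : IsCompact M1)
    (h1v : Convex ℝ M1) (h1ne : M1.Nonempty)
    (h2sub : M2 ⊆ stdSimplex ℝ (Fin m × Fin n)) (h2c : IsCompact M2)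
    (h2v : Convex ℝ M2) (h2ne : M2.Nonempty)
    (hdistinct : M1 ≠ M2)
    (hplus : MplusSet uL M1 = MplusSet uL M2)
    (hcase : (M2 \ M1).Nonempty ∨ MminusSet uL M1 = MminusSet uL M2) :
    (∃ uO : Fin m → Fin n → ℝ, VL uL uO M2 < VL uL uO M1) ∧
      ¬ ParetoDominates uL M2 M1 := by
  have hEx : ∃ uO : Fin m → Fin n → ℝ, VL uL uO M2 < VL uL uO M1 := by
    by_contra hno
    push_neg at hno
    have hA := stepA uL hbound h1c h1ne h1sub h2c h2ne h2sub hplus hno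
    have hIncl21 : M2 ⊆ M1 := subset_of_sSup_le h1c.isClosed h1v h1ne h2c hA
    rcases hcase with hc1 | hminus
    · obtain ⟨ψ, hψ2, hψ1⟩ := hc1
      exact hψ1 (hIncl21 hψ2)
    · have hB := stepB uL hbound h1c h1ne h1sub h2c h2ne h2sub hminus hno
      have hIncl12 : M1 ⊆ M2 := subset_of_sSup_le h2c.isClosed h2v h2ne h1c hB
      exact hdistinct (Set.Subset.antisymm hIncl12 hIncl21)
  refine ⟨hEx, ?_⟩
  intro hPD
  obtain ⟨uO, h⟩ := hEx
  exact absurd (hPD.1 uO) (not_le.2 h)
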